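/- Let v_1,…,v_n ∈ R^k (with k < n) satisfy Σ_{i=1}^n v_i v_iᵀ = I_k, and let a_1,…,a_n ∈ R^ℓ be arbitrary vectors. Then for every integer r with k < r ≤ n there exist nonnegative weights s_1,…,s_n, at most r of which are nonzero, such that λ_k(Σ_{i=1}^n s_i v_i v_iᵀ) ≥ (1 − √(k/r))² and Tr(Σ_{i=1}^n s_i a_i a_iᵀ) ≤ Tr(Σ_{i=1}^n a_i a_iᵀ) = Σ_{i=1}^n ‖a_i‖₂². -/

import Mathlib

open Matrix MeasureTheory

noncomputable def frobSq {m n : Type*} [Fintype m] [Fintype n] (A : Matrix m n ℝ) : ℝ :=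
  ∑ i, ∑ j, A i j ^ 2

noncomputable def spec {m n : Type*} [Fintype m] [Fintype n] [DecidableEq n]
    (A : Matrix m n ℝ) : ℝ :=
  ‖LinearMap.toContinuousLinearMap (Matrix.toEuclideanLin A)‖

noncomputable def specErr {m n : Type*} [Fintype m] [Fintype n] [DecidableEq n]
    (A : Matrix m n ℝ) (k : ℕ) : ℝ :=
  sInf {e : ℝ | ∃ X : Matrix m n ℝ, X.rank ≤ k ∧ e = spec (A - X)}

noncomputable def frobSqErr {m n : Type*} [Fintype m] [Fintype n]
    (A : Matrix m n ℝ) (k : ℕ) : ℝ :=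
  sInf {e : ℝ | ∃ X : Matrix m n ℝ, X.rank ≤ k ∧ e = frobSq (A - X)}

noncomputable def specErrIn {m n r : Type*} [Fintype m] [Fintype n] [DecidableEq n]
    [Fintype r] (A : Matrix m n ℝ) (C : Matrix m r ℝ) (k : ℕ) : ℝ :=
  sInf {e : ℝ | ∃ X : Matrix m n ℝ, X.rank ≤ k ∧
    LinearMap.range X.mulVecLin ≤ LinearMap.range C.mulVecLin ∧ e = spec (A - X)}

noncomputable def frobSqErrIn {m n r : Type*} [Fintype m] [Fintype n] [Fintype r]
    (A : Matrix m n ℝ) (C : Matrix m r ℝ) (k : ℕ) : ℝ :=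
  sInf {e : ℝ | ∃ X : Matrix m n ℝ, X.rank ≤ k ∧
    LinearMap.range X.mulVecLin ≤ LinearMap.range C.mulVecLin ∧ e = frobSq (A - X)}

def IsMoorePenrose {m n : Type*} [Fintype m] [Fintype n]
    (M : Matrix m n ℝ) (P : Matrix n m ℝ) : Prop :=
  M * P * M = M ∧ P * M * P = P ∧ (M * P)ᵀ = M * P ∧ (P * M)ᵀ = P * M

section BSSHelpers

variable {k : ℕ} {U : Matrix (Fin k) (Fin k) ℝ}


lemma trace_mul_vmv (X : Matrix (Fin k) (Fin k) ℝ) (v : Fin k → ℝ) :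
    (X * vecMulVec v v).trace = v ⬝ᵥ (X *ᵥ v) := by
  simp only [Matrix.trace, Matrix.diag, Matrix.mul_apply, vecMulVec_apply, dotProduct,
    mulVec, Finset.mul_sum]
  exact Finset.sum_congr rfl fun i _ => Finset.sum_congr rfl fun j _ => by ring

lemma vmv_mul (v w : Fin k → ℝ) (X : Matrix (Fin k) (Fin k) ℝ) :
    vecMulVec v w * X = vecMulVec v (Xᵀ *ᵥ w) := by
  ext i j
  simp only [Matrix.mul_apply, vecMulVec_apply, mulVec, dotProduct, transpose_apply,
    Finset.mul_sum]
  exact Finset.sum_congr rfl fun m _ => by ring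

lemma vmv_vmv (a b c d : Fin k → ℝ) :
    vecMulVec a b * vecMulVec c d = (b ⬝ᵥ c) • vecMulVec a d := by
  ext i j
  simp only [Matrix.mul_apply, vecMulVec_apply, Matrix.smul_apply, dotProduct, smul_eq_mul,
    Finset.sum_mul, Finset.mul_sum]
  exact Finset.sum_congr rfl fun m _ => by ring

lemma vmv_transpose (a b : Fin k → ℝ) : (vecMulVec a b)ᵀ = vecMulVec b a := by
  ext i j; simp [vecMulVec_apply, mul_comm]

lemma sherman (M Q : Matrix (Fin k) (Fin k) ℝ) (v : Fin k → ℝ) (t : ℝ)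
    (hMQ : M * Q = 1) (hQ : Qᵀ = Q) (hden : 1 + t * (v ⬝ᵥ Q *ᵥ v) ≠ 0) :
    (M + t • vecMulVec v v) * (Q - (t / (1 + t * (v ⬝ᵥ Q *ᵥ v))) • (Q * vecMulVec v v * Q)) = 1 := by
  set q := v ⬝ᵥ Q *ᵥ v with hq
  set c := t / (1 + t * q) with hc
  set V := vecMulVec v v with hV
  have h1 : M * (Q * V * Q) = V * Q := by
    rw [← Matrix.mul_assoc, ← Matrix.mul_assoc, hMQ, Matrix.one_mul]
  have h2 : V * Q = vecMulVec v (Q *ᵥ v) := by rw [hV, vmv_mul, hQ]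
  have h3 : V * (Q * V * Q) = q • (V * Q) := by
    calc V * (Q * V * Q) = (V * Q) * (V * Q) := by
          rw [Matrix.mul_assoc Q, ← Matrix.mul_assoc]
      _ = ((Q *ᵥ v) ⬝ᵥ v) • vecMulVec v (Q *ᵥ v) := by rw [h2]; exact vmv_vmv _ _ _ _
      _ = q • (V * Q) := by rw [h2, hq, dotProduct_comm]
  have e1 : (M + t • V) * Q = 1 + t • (V * Q) := by
    rw [Matrix.add_mul, hMQ, Matrix.smul_mul]
  have e2 : (M + t • V) * (c • (Q * V * Q)) = (c + c * t * q) • (V * Q) := by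
    rw [Matrix.mul_smul, Matrix.add_mul, h1, Matrix.smul_mul, h3, smul_smul,
      smul_add, smul_smul, ← add_smul]
    ring_nf
  have hct : t = c + c * t * q := by
    have : c * (1 + t * q) = t := div_mul_cancel₀ t hden
    linarith [this]
  rw [Matrix.mul_sub, e1, e2, ← hct]
  abel


lemma cd_mul (hU1 : Uᵀ * U = 1) (f g : Fin k → ℝ) :
    (U * diagonal f * Uᵀ) * (U * diagonal g * Uᵀ) = U * diagonal (f * g) * Uᵀ := by
  rw [Matrix.mul_assoc (U * diagonal f) Uᵀ (U * diagonal g * Uᵀ),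
    show Uᵀ * (U * diagonal g * Uᵀ) = diagonal g * Uᵀ from by
      rw [← Matrix.mul_assoc, ← Matrix.mul_assoc, hU1, Matrix.one_mul],
    ← Matrix.mul_assoc, Matrix.mul_assoc U, diagonal_mul_diagonal]
  rfl

lemma cd_trace (hU1 : Uᵀ * U = 1) (f : Fin k → ℝ) :
    (U * diagonal f * Uᵀ).trace = ∑ i, f i := by
  rw [Matrix.trace_mul_cycle, hU1, Matrix.one_mul, Matrix.trace_diagonal]

lemma cd_smul_one (hU2 : U * Uᵀ = 1) (c : ℝ) :
    U * diagonal (fun _ => c) * Uᵀ = c • (1 : Matrix (Fin k) (Fin k) ℝ) := by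
  have h : diagonal (fun _ : Fin k => c) = c • (1 : Matrix (Fin k) (Fin k) ℝ) := by
    ext i j; by_cases hij : i = j <;> simp [diagonal, Matrix.one_apply, hij]
  rw [h, Matrix.mul_smul, Matrix.smul_mul, Matrix.mul_one, hU2]

lemma cd_sub (f g : Fin k → ℝ) :
    (U * diagonal f * Uᵀ) - (U * diagonal g * Uᵀ) = U * diagonal (f - g) * Uᵀ := by
  rw [← Matrix.sub_mul, ← Matrix.mul_sub, diagonal_sub]
  rfl

lemma cd_inv (hU1 : Uᵀ * U = 1) (hU2 : U * Uᵀ = 1) (f : Fin k → ℝ) (hf : ∀ i, f i ≠ 0) :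
    (U * diagonal f * Uᵀ)⁻¹ = U * diagonal (fun i => (f i)⁻¹) * Uᵀ := by
  apply Matrix.inv_eq_right_inv
  rw [cd_mul hU1]
  have h : diagonal (f * (fun i => (f i)⁻¹)) = (1 : Matrix (Fin k) (Fin k) ℝ) := by
    rw [show f * (fun i => (f i)⁻¹) = fun _ => (1:ℝ) from funext fun i => mul_inv_cancel₀ (hf i)]
    exact diagonal_one
  rw [h, Matrix.mul_one, hU2]

lemma cd_isHermitian (f : Fin k → ℝ) : (U * diagonal f * Uᵀ).IsHermitian := by
  unfold Matrix.IsHermitian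
  rw [show (U * diagonal f * Uᵀ)ᴴ = (U * diagonal f * Uᵀ)ᵀ from rfl]
  rw [Matrix.transpose_mul, Matrix.transpose_mul, transpose_transpose,
    diagonal_transpose, Matrix.mul_assoc]

lemma quadform_conj (f : Fin k → ℝ) (x : Fin k → ℝ) :
    x ⬝ᵥ ((U * diagonal f * Uᵀ) *ᵥ x) = ∑ i, f i * (Uᵀ *ᵥ x) i ^ 2 := by
  rw [← Matrix.mulVec_mulVec, ← Matrix.mulVec_mulVec, Matrix.dotProduct_mulVec,
    Matrix.dotProduct_mulVec]
  have hxU : x ᵥ* U = Uᵀ *ᵥ x := by rw [← Matrix.mulVec_transpose]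
  rw [hxU]
  have h : (Uᵀ *ᵥ x) ᵥ* diagonal f = fun i => f i * (Uᵀ *ᵥ x) i := by
    funext i; rw [Matrix.vecMul_diagonal]; ring
  rw [h]
  simp only [dotProduct, pow_two]
  exact Finset.sum_congr rfl fun i _ => by ring

lemma cd_posDef (hU2 : U * Uᵀ = 1) (f : Fin k → ℝ) (hf : ∀ i, 0 < f i) :
    (U * diagonal f * Uᵀ).PosDef := by
  refine Matrix.PosDef.of_dotProduct_mulVec_pos (cd_isHermitian f) ?_
  intro x hx
  have hstar : (star x : Fin k → ℝ) = x := by simp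
  rw [hstar, quadform_conj f x]
  have hy : Uᵀ *ᵥ x ≠ 0 := by
    intro h
    apply hx
    have h2 : U *ᵥ (Uᵀ *ᵥ x) = x := by
      rw [Matrix.mulVec_mulVec, hU2, Matrix.one_mulVec]
    rw [h, Matrix.mulVec_zero] at h2
    exact h2.symm
  obtain ⟨i, hi⟩ := Function.ne_iff.mp hy
  have hi' : (Uᵀ *ᵥ x) i ≠ 0 := hi
  apply Finset.sum_pos' (fun j _ => mul_nonneg (hf j).le (sq_nonneg _))
  exact ⟨i, Finset.mem_univ i, mul_pos (hf i) (by positivity)⟩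

lemma cd_posDef_iff (hU1 : Uᵀ * U = 1) (hU2 : U * Uᵀ = 1) (f : Fin k → ℝ) :
    (U * diagonal f * Uᵀ).PosDef ↔ ∀ i, 0 < f i := by
  constructor
  · intro h i
    have hcolne : (fun m => U m i) ≠ 0 := by
      intro hcol
      have h1 : (Uᵀ * U) i i = 0 := by
        rw [Matrix.mul_apply]
        simp only [transpose_apply]
        have h2 : ∀ j, U j i = 0 := fun j => congrFun hcol j
        simp [h2]
      rw [hU1] at h1
      simp at h1
    have hq := h.dotProduct_mulVec_pos (x := fun m => U m i) hcolne
    have hstar : (star (fun m => U m i) : Fin k → ℝ) = fun m => U m i := by simp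
    rw [hstar, quadform_conj] at hq
    have hcol : (Uᵀ *ᵥ fun m => U m i) = fun m => (1 : Matrix (Fin k) (Fin k) ℝ) m i := by
      funext m
      rw [← hU1]
      simp [Matrix.mulVec, Matrix.mul_apply, dotProduct, transpose_apply]
    rw [hcol] at hq
    simpa [Matrix.one_apply, Finset.sum_ite_eq] using hq
  · exact cd_posDef hU2 f


lemma spectral_wrap {A : Matrix (Fin k) (Fin k) ℝ} (hA : A.IsHermitian) :
    ∃ (U : Matrix (Fin k) (Fin k) ℝ) (d : Fin k → ℝ),
      Uᵀ * U = 1 ∧ U * Uᵀ = 1 ∧ A = U * diagonal d * Uᵀ := by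
  refine ⟨(Matrix.IsHermitian.eigenvectorUnitary hA : Matrix (Fin k) (Fin k) ℝ),
    hA.eigenvalues, ?_, ?_, ?_⟩
  · have h := ((Matrix.IsHermitian.eigenvectorUnitary hA).2).1
    simpa [Matrix.star_eq_conjTranspose, Matrix.conjTranspose_eq_transpose_of_trivial] using h
  · have h := ((Matrix.IsHermitian.eigenvectorUnitary hA).2).2
    simpa [Matrix.star_eq_conjTranspose, Matrix.conjTranspose_eq_transpose_of_trivial] using h
  · have h := hA.spectral_theorem
    simpa [Matrix.star_eq_conjTranspose, Matrix.conjTranspose_eq_transpose_of_trivial] using h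

lemma eig_lower {A : Matrix (Fin k) (Fin k) ℝ} (hA : A.IsHermitian) (c : ℝ)
    (h : (A - c • 1).PosSemidef) : ∀ j, c ≤ hA.eigenvalues j := by
  intro j
  set x : Fin k → ℝ := ⇑(hA.eigenvectorBasis j) with hx
  have hnorm : ‖hA.eigenvectorBasis j‖ = 1 := hA.eigenvectorBasis.orthonormal.1 j
  have hdot : x ⬝ᵥ x = 1 := by
    have h1 : ‖hA.eigenvectorBasis j‖ = Real.sqrt (∑ i, (x i)^2) := by
      rw [EuclideanSpace.norm_eq]
      congr 1
      exact Finset.sum_congr rfl fun i _ => by rw [Real.norm_eq_abs, sq_abs]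
    rw [h1] at hnorm
    have h2 : ∑ i, (x i)^2 = 1 := by
      have := Real.sqrt_eq_one.mp hnorm
      exact this
    simpa [dotProduct, pow_two] using h2
  have hmv : A *ᵥ x = hA.eigenvalues j • x := hA.mulVec_eigenvectorBasis j
  have hq := h.dotProduct_mulVec_nonneg x
  have hsx : (star x : Fin k → ℝ) = x := by simp
  rw [hsx, Matrix.sub_mulVec, Matrix.smul_mulVec, Matrix.one_mulVec, hmv,
    dotProduct_sub, dotProduct_smul, dotProduct_smul, smul_eq_mul, smul_eq_mul, hdot] at hq
  linarith

lemma key_ineq (hk : 0 < k) (e : Fin k → ℝ) (he : ∀ i, 0 < e i)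
    (hφ : ∑ i, (e i + 1)⁻¹ ≤ 1) :
    0 < (∑ i, (e i)⁻¹) - (∑ i, (e i + 1)⁻¹) ∧
    ((∑ i, (e i)⁻¹) - (∑ i, (e i + 1)⁻¹)) * (1 + ((∑ i, (e i)⁻¹) - (∑ i, (e i + 1)⁻¹)))
      ≤ ∑ i, ((e i)^2)⁻¹ := by
  set Δ := (∑ i, (e i)⁻¹) - (∑ i, (e i + 1)⁻¹) with hΔ
  have hΔeq : Δ = ∑ i, (e i * (e i + 1))⁻¹ := by
    rw [hΔ, ← Finset.sum_sub_distrib]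
    refine Finset.sum_congr rfl fun i _ => ?_
    have h1 := he i
    field_simp
    try ring
  have hΔpos : 0 < Δ := by
    rw [hΔeq]
    apply Finset.sum_pos (fun i _ => by have := he i; positivity)
    have : Nonempty (Fin k) := Fin.pos_iff_nonempty.mp hk
    exact Finset.univ_nonempty
  refine ⟨hΔpos, ?_⟩
  have hS : (∑ i, ((e i)^2)⁻¹) - Δ = ∑ i, ((e i)^2 * (e i + 1))⁻¹ := by
    rw [hΔeq, ← Finset.sum_sub_distrib]
    refine Finset.sum_congr rfl fun i _ => ?_
    have h1 := he i
    field_simp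
    try ring
  have hCS : Δ^2 ≤ (∑ i, ((e i)^2 * (e i + 1))⁻¹) * (∑ i, (e i + 1)⁻¹) := by
    have h := Finset.sum_mul_sq_le_sq_mul_sq Finset.univ
      (fun i => (e i * Real.sqrt (e i + 1))⁻¹) (fun i => (Real.sqrt (e i + 1))⁻¹)
    have hfg : ∀ i : Fin k, (e i * Real.sqrt (e i + 1))⁻¹ * (Real.sqrt (e i + 1))⁻¹
        = (e i * (e i + 1))⁻¹ := by
      intro i
      rw [← mul_inv]
      congr 1
      rw [mul_assoc, Real.mul_self_sqrt (by linarith [he i])]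
    have hf2 : ∀ i : Fin k, ((e i * Real.sqrt (e i + 1))⁻¹)^2 = ((e i)^2 * (e i + 1))⁻¹ := by
      intro i
      rw [inv_pow, mul_pow, Real.sq_sqrt (by linarith [he i])]
    have hg2 : ∀ i : Fin k, ((Real.sqrt (e i + 1))⁻¹)^2 = (e i + 1)⁻¹ := by
      intro i
      rw [inv_pow, Real.sq_sqrt (by linarith [he i])]
    rw [Finset.sum_congr rfl (fun i _ => hfg i), Finset.sum_congr rfl (fun i _ => hf2 i),
      Finset.sum_congr rfl (fun i _ => hg2 i)] at h
    rw [hΔeq]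
    exact h
  have h2 : Δ^2 ≤ (∑ i, ((e i)^2 * (e i + 1))⁻¹) := by
    calc Δ^2 ≤ (∑ i, ((e i)^2 * (e i + 1))⁻¹) * (∑ i, (e i + 1)⁻¹) := hCS
      _ ≤ (∑ i, ((e i)^2 * (e i + 1))⁻¹) * 1 := by
          apply mul_le_mul_of_nonneg_left hφ
          apply Finset.sum_nonneg; intro i _; have := he i; positivity
      _ = _ := mul_one _
  nlinarith [hS, h2]

lemma vmv_trace (v w : Fin k → ℝ) : (vecMulVec v w).trace = v ⬝ᵥ w := by
  simp [Matrix.trace, Matrix.diag, vecMulVec_apply, dotProduct]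

lemma vmv_posSemidef (v : Fin k → ℝ) : (vecMulVec v v).PosSemidef := by
  refine Matrix.PosSemidef.of_dotProduct_mulVec_nonneg ?_ ?_
  · unfold Matrix.IsHermitian
    rw [show (vecMulVec v v)ᴴ = (vecMulVec v v)ᵀ from rfl, vmv_transpose]
  · intro x
    have hsx : (star x : Fin k → ℝ) = x := by simp
    rw [hsx]
    have h : x ⬝ᵥ (vecMulVec v v *ᵥ x) = (v ⬝ᵥ x) ^ 2 := by
      simp only [dotProduct, mulVec, vecMulVec_apply, pow_two, Finset.sum_mul,
        Finset.mul_sum]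
      rw [Finset.sum_comm]
      exact Finset.sum_congr rfl fun i _ => Finset.sum_congr rfl fun j _ => by ring
    rw [h]
    positivity

lemma smul_posSemidef {M : Matrix (Fin k) (Fin k) ℝ} (hM : M.PosSemidef) {c : ℝ} (hc : 0 ≤ c) :
    (c • M).PosSemidef := by
  refine Matrix.PosSemidef.of_dotProduct_mulVec_nonneg ?_ ?_
  · unfold Matrix.IsHermitian
    rw [show (c • M)ᴴ = (c • M)ᵀ from rfl, Matrix.transpose_smul,
      show Mᵀ = M from hM.1]
  · intro x
    rw [Matrix.smul_mulVec, dotProduct_smul, smul_eq_mul]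
    have := hM.dotProduct_mulVec_nonneg x
    have hsx : (star x : Fin k → ℝ) = x := by simp
    rw [hsx] at this
    exact mul_nonneg hc this

lemma smul_posDef {M : Matrix (Fin k) (Fin k) ℝ} (hM : M.PosDef) {c : ℝ} (hc : 0 < c) :
    (c • M).PosDef := by
  refine Matrix.PosDef.of_dotProduct_mulVec_pos ?_ ?_
  · unfold Matrix.IsHermitian
    rw [show (c • M)ᴴ = (c • M)ᵀ from rfl, Matrix.transpose_smul,
      show Mᵀ = M from hM.1]
  · intro x hx
    rw [Matrix.smul_mulVec, dotProduct_smul, smul_eq_mul]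
    have := hM.dotProduct_mulVec_pos hx
    have hsx : (star x : Fin k → ℝ) = x := by simp
    rw [hsx] at this
    exact mul_pos hc this

lemma sum_quadform {n : ℕ} (v : Fin n → Fin k → ℝ)
    (hv : ∑ i, vecMulVec (v i) (v i) = 1) (X : Matrix (Fin k) (Fin k) ℝ) :
    ∑ i, (v i) ⬝ᵥ (X *ᵥ (v i)) = X.trace := by
  have h : ∀ i : Fin n, (v i) ⬝ᵥ (X *ᵥ (v i)) = (X * vecMulVec (v i) (v i)).trace :=
    fun i => (trace_mul_vmv X (v i)).symm
  rw [Finset.sum_congr rfl fun i _ => h i, ← Matrix.trace_sum, ← Matrix.mul_sum, hv,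
    Matrix.mul_one]

set_option maxHeartbeats 2000000 in
lemma bss_step {n ℓ : ℕ} (hk : 0 < k) (v : Fin n → Fin k → ℝ) (a : Fin n → Fin ℓ → ℝ)
    (hv : ∑ i, vecMulVec (v i) (v i) = 1) (ε : ℝ) (hε0 : 0 < ε) (hε1 : ε < 1)
    (A : Matrix (Fin k) (Fin k) ℝ) (hAH : Aᵀ = A) (l : ℝ)
    (hpd : (A - l • 1).PosDef) (htr : (A - l • 1)⁻¹.trace ≤ ε) :
    ∃ (i : Fin n) (t : ℝ), 0 < t ∧
      t * (∑ j, a i j ^ 2) * (1 - ε) ≤ (∑ i', ∑ j, a i' j ^ 2) ∧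
      (A + t • vecMulVec (v i) (v i) - (l + 1) • 1).PosDef ∧
      (A + t • vecMulVec (v i) (v i) - (l + 1) • 1)⁻¹.trace ≤ ε := by
  classical
  have hAHerm : A.IsHermitian := by
    unfold Matrix.IsHermitian
    rw [show Aᴴ = Aᵀ from rfl, hAH]
  obtain ⟨U, d, hU1, hU2, hAd⟩ := spectral_wrap hAHerm
  -- B = A - l•1 in diagonal form
  have hB : A - l • 1 = U * diagonal (fun i => d i - l) * Uᵀ := by
    rw [hAd, ← cd_smul_one hU2 l, cd_sub]
    rfl
  have hdl : ∀ i, 0 < d i - l := by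
    rw [hB] at hpd
    exact (cd_posDef_iff hU1 hU2 _).mp hpd
  have hBinv : (A - l • 1)⁻¹ = U * diagonal (fun i => (d i - l)⁻¹) * Uᵀ := by
    rw [hB]
    exact cd_inv hU1 hU2 _ (fun i => (hdl i).ne')
  have hBtr : (A - l • 1)⁻¹.trace = ∑ i, (d i - l)⁻¹ := by
    rw [hBinv, cd_trace hU1]
  have hφ : ∑ i, (d i - l)⁻¹ ≤ ε := by rw [← hBtr]; exact htr
  -- each diagonal gap exceeds 1
  have hgap : ∀ i, 1 < d i - l := by
    intro i
    have h1 : (d i - l)⁻¹ ≤ ε := by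
      calc (d i - l)⁻¹ ≤ ∑ i', (d i' - l)⁻¹ :=
            Finset.single_le_sum (fun i' _ => (inv_nonneg.mpr (hdl i').le))
              (Finset.mem_univ i)
        _ ≤ ε := hφ
    have h2 : (d i - l)⁻¹ < 1 := lt_of_le_of_lt h1 hε1
    have h3 := (inv_lt_one₀ (hdl i)).mp h2
    exact h3
  -- e = gaps at level l+1
  set e : Fin k → ℝ := fun i => d i - (l + 1) with he
  have hepos : ∀ i, 0 < e i := fun i => by have := hgap i; simp only [he]; linarith
  have he1 : ∀ i, e i + 1 = d i - l := fun i => by simp only [he]; ring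
  set N : Matrix (Fin k) (Fin k) ℝ := A - (l + 1) • 1 with hN
  have hNd : N = U * diagonal e * Uᵀ := by
    rw [hN, hAd, ← cd_smul_one hU2 (l+1), cd_sub]
    rfl
  have hNpd : N.PosDef := by rw [hNd]; exact cd_posDef hU2 e hepos
  set Ninv : Matrix (Fin k) (Fin k) ℝ := U * diagonal (fun i => (e i)⁻¹) * Uᵀ with hNi
  have hNNi : N * Ninv = 1 := by
    rw [hNd, hNi, cd_mul hU1,
      show e * (fun i => (e i)⁻¹) = fun _ => (1:ℝ) from funext fun i => mul_inv_cancel₀ (hepos i).ne',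
      show diagonal (fun _ : Fin k => (1:ℝ)) = 1 from diagonal_one, Matrix.mul_one, hU2]
  have hNinv_eq : N⁻¹ = Ninv := Matrix.inv_eq_right_inv hNNi
  have hNiT : Ninvᵀ = Ninv := by
    have := cd_isHermitian (U := U) (fun i => (e i)⁻¹)
    unfold Matrix.IsHermitian at this
    rw [hNi]
    exact this
  set Ninv2 : Matrix (Fin k) (Fin k) ℝ := U * diagonal (fun i => ((e i)^2)⁻¹) * Uᵀ with hNi2
  have hNiNi : Ninv * Ninv = Ninv2 := by
    rw [hNi, hNi2, cd_mul hU1]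
    have hff : ((fun i => (e i)⁻¹) * fun i => (e i)⁻¹) = fun i => ((e i)^2)⁻¹ :=
      funext fun i => by simp [Pi.mul_apply, pow_two, mul_inv]
    rw [hff]
  have hNitr : Ninv.trace = ∑ i, (e i)⁻¹ := by rw [hNi, cd_trace hU1]
  have hNi2tr : Ninv2.trace = ∑ i, ((e i)^2)⁻¹ := by rw [hNi2, cd_trace hU1]
  -- key inequality
  have hφ' : ∑ i, (e i + 1)⁻¹ ≤ 1 := by
    calc ∑ i, (e i + 1)⁻¹ = ∑ i, (d i - l)⁻¹ := by
          exact Finset.sum_congr rfl fun i _ => by rw [he1]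
      _ ≤ ε := hφ
      _ ≤ 1 := hε1.le
  obtain ⟨hΔpos, hkey⟩ := key_ineq hk e hepos hφ'
  set Δ : ℝ := (∑ i, (e i)⁻¹) - (∑ i, (e i + 1)⁻¹) with hΔ
  -- L and u functions
  set L : Fin n → ℝ := fun i => (v i ⬝ᵥ (Ninv2 *ᵥ v i)) / Δ - (v i ⬝ᵥ (Ninv *ᵥ v i)) with hL
  set T : ℝ := ∑ i', ∑ j, a i' j ^ 2 with hT
  set u : Fin n → ℝ := fun i => (1 - ε) * (∑ j, a i j ^ 2) / T with hu
  have hTnn : 0 ≤ T := by rw [hT]; positivity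
  have hunn : ∀ i, 0 ≤ u i := fun i => by
    rw [hu]
    have : (0:ℝ) ≤ ∑ j, a i j ^2 := by positivity
    have h1ε : (0:ℝ) ≤ 1 - ε := by linarith
    positivity
  have hsumL : 1 - ε ≤ ∑ i, L i := by
    have h1 : ∑ i, L i = Ninv2.trace / Δ - Ninv.trace := by
      rw [hL, Finset.sum_sub_distrib, ← Finset.sum_div, sum_quadform v hv,
        sum_quadform v hv]
    have h2 : Δ * (1 + Δ) ≤ Ninv2.trace := by rw [hNi2tr]; exact hkey
    have h3 : 1 + Δ ≤ Ninv2.trace / Δ := by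
      rw [le_div_iff₀ hΔpos]
      calc (1 + Δ) * Δ = Δ * (1 + Δ) := by ring
        _ ≤ _ := h2
    have h4 : ∑ i, (e i + 1)⁻¹ ≤ ε := by
      calc ∑ i, (e i + 1)⁻¹ = ∑ i, (d i - l)⁻¹ :=
            Finset.sum_congr rfl fun i _ => by rw [he1]
        _ ≤ ε := hφ
    rw [h1, hNitr]
    have : Δ = Ninv.trace - ∑ i, (e i + 1)⁻¹ := by rw [hΔ, hNitr]
    rw [hNitr] at this
    linarith
  have hsumu : ∑ i, u i ≤ 1 - ε := by
    rcases eq_or_ne T 0 with hT0 | hT0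
    · have hsum0 : ∑ i', ∑ j, a i' j ^ 2 = 0 := by rw [← hT]; exact hT0
      have hall : ∀ i, (∑ j, a i j ^ 2) = 0 := fun i =>
        (Finset.sum_eq_zero_iff_of_nonneg (fun i' _ => by positivity)).mp hsum0 i
          (Finset.mem_univ i)
      have hzero : ∑ i, u i = 0 := Finset.sum_eq_zero fun i _ => by
        simp only [hu]; rw [hall i]; simp
      linarith
    · have : ∑ i, u i = 1 - ε := by
        rw [hu]
        rw [← Finset.sum_div, ← Finset.mul_sum, ← hT, mul_div_assoc,
          div_self hT0, mul_one]
      linarith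
  -- select an index
  have h1ε : (0:ℝ) < 1 - ε := by linarith
  have hsel : ∃ i, u i ≤ L i ∧ 0 < L i := by
    by_cases hex : ∃ i, u i < L i
    · obtain ⟨i, hi⟩ := hex
      exact ⟨i, hi.le, lt_of_le_of_lt (hunn i) hi⟩
    · push_neg at hex
      have hsLu : ∑ i, L i ≤ ∑ i, u i := Finset.sum_le_sum (fun i _ => hex i)
      have hDsum : ∑ i, (u i - L i) = 0 := by
        rw [Finset.sum_sub_distrib]
        linarith
      have hpoint : ∀ i ∈ Finset.univ, u i - L i = 0 :=
        (Finset.sum_eq_zero_iff_of_nonneg (fun i _ => by linarith [hex i])).mp hDsum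
      have hLpos : ∃ i, 0 < L i := by
        by_contra hno
        push_neg at hno
        have hsL : ∑ i, L i ≤ 0 := Finset.sum_nonpos (fun i _ => hno i)
        linarith
      obtain ⟨i, hi⟩ := hLpos
      have := hpoint i (Finset.mem_univ i)
      exact ⟨i, by linarith, hi⟩
  obtain ⟨i0, hu_le_L, hLpos⟩ := hsel
  set t : ℝ := (L i0)⁻¹ with ht
  have htpos : 0 < t := inv_pos.mpr hLpos
  set p : ℝ := v i0 ⬝ᵥ (Ninv2 *ᵥ v i0) with hp
  set q : ℝ := v i0 ⬝ᵥ (Ninv *ᵥ v i0) with hq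
  have hqnn : 0 ≤ q := by
    have hps : Ninv.PosSemidef := by
      rw [hNi]; exact (cd_posDef hU2 _ (fun i => inv_pos.mpr (hepos i))).posSemidef
    have h2 := hps.dotProduct_mulVec_nonneg (v i0)
    rwa [show (star (v i0) : Fin k → ℝ) = v i0 from by simp] at h2
  have hden : 0 < 1 + t * q := by positivity
  have harr : A + t • vecMulVec (v i0) (v i0) - (l + 1) • 1
      = N + t • vecMulVec (v i0) (v i0) := by rw [hN]; abel
  have h4 : ∑ i, (e i + 1)⁻¹ ≤ ε := by
    calc ∑ i, (e i + 1)⁻¹ = ∑ i, (d i - l)⁻¹ :=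
          Finset.sum_congr rfl fun i _ => by rw [he1]
      _ ≤ ε := hφ
  refine ⟨i0, t, htpos, ?_, ?_, ?_⟩
  · -- budget
    rcases eq_or_lt_of_le (show (0:ℝ) ≤ ∑ j, a i0 j ^ 2 by positivity) with hz | hz
    · rw [← hz]
      simpa using hTnn
    · have hTpos : 0 < T := lt_of_lt_of_le hz (by
        rw [hT]
        exact Finset.single_le_sum (f := fun i' => ∑ j, a i' j ^ 2)
          (fun i' _ => by positivity) (Finset.mem_univ i0))
      have hupos : 0 < u i0 := by
        simp only [hu]; positivity
      have htle : t ≤ (u i0)⁻¹ := by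
        rw [ht]
        exact inv_anti₀ hupos hu_le_L
      have hXnn : (0:ℝ) ≤ ∑ j, a i0 j ^ 2 := hz.le
      calc t * (∑ j, a i0 j ^ 2) * (1 - ε)
          ≤ (u i0)⁻¹ * (∑ j, a i0 j ^ 2) * (1 - ε) := by
            apply mul_le_mul_of_nonneg_right
              (mul_le_mul_of_nonneg_right htle hXnn) h1ε.le
        _ = T := by
            simp only [hu]
            rw [inv_div]
            field_simp
  · rw [harr]
    exact hNpd.add_posSemidef (smul_posSemidef (vmv_posSemidef (v i0)) htpos.le)
  · rw [harr]
    set R : Matrix (Fin k) (Fin k) ℝ :=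
      Ninv - (t / (1 + t * q)) • (Ninv * vecMulVec (v i0) (v i0) * Ninv) with hR
    have hinv : (N + t • vecMulVec (v i0) (v i0))⁻¹ = R :=
      Matrix.inv_eq_right_inv (by
        rw [hR]
        exact sherman N Ninv (v i0) t hNNi hNiT hden.ne')
    rw [hinv, hR]
    have htr1 : (Ninv * vecMulVec (v i0) (v i0) * Ninv).trace = p := by
      rw [Matrix.mul_assoc, Matrix.trace_mul_comm, Matrix.mul_assoc, hNiNi, Matrix.trace_mul_comm, trace_mul_vmv, ← hp]
    rw [Matrix.trace_sub, Matrix.trace_smul, htr1, hNitr, smul_eq_mul]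
    have hΔL : Δ * L i0 = p - Δ * q := by
      simp only [hL, ← hp, ← hq]
      field_simp
    have h5 : t * (p - Δ * q) = Δ := by
      rw [← hΔL, ht]
      field_simp
    have hstep : Δ ≤ t / (1 + t * q) * p := by
      rw [div_mul_eq_mul_div, le_div_iff₀ hden]
      nlinarith [h5]
    have hΔval : Δ = (∑ i, (e i)⁻¹) - (∑ i, (e i + 1)⁻¹) := hΔ
    linarith


end BSSHelpers

set_option maxHeartbeats 4000000 in
/-- **Dual Set Spectral-Frobenius Sparsification** (Lemma 3.6 of
Boutsidis–Drineas–Magdon-Ismail): given a decomposition of the identity `∑ vᵢvᵢᵀ = I_k`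
(`k < n`), arbitrary vectors `a₁, …, aₙ ∈ ℝ^ℓ`, and `k < r ≤ n`, there are nonnegative
weights `sᵢ`, at most `r` of which are nonzero, with
`λ_min(∑ sᵢvᵢvᵢᵀ) ≥ (1 - √(k/r))²` and `Tr(∑ sᵢaᵢaᵢᵀ) ≤ Tr(∑ aᵢaᵢᵀ) = ∑ ‖aᵢ‖²`. -/
theorem dual_set_spectral_frobenius_sparsification
    {n k ℓ : ℕ} (hkn : k < n)
    (v : Fin n → Fin k → ℝ) (a : Fin n → Fin ℓ → ℝ)
    (hv : ∑ i, Matrix.vecMulVec (v i) (v i) = 1)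
    (r : ℕ) (hkr : k < r) (hrn : r ≤ n) :
    ∃ s : Fin n → ℝ,
      (∀ i, 0 ≤ s i) ∧
      {i | s i ≠ 0}.ncard ≤ r ∧
      (∀ hA : (∑ i, s i • Matrix.vecMulVec (v i) (v i)).IsHermitian,
        ∀ j, (1 - Real.sqrt ((k : ℝ) / (r : ℝ))) ^ 2 ≤ hA.eigenvalues j) ∧
      (∑ i, s i • Matrix.vecMulVec (a i) (a i)).trace ≤
        (∑ i, Matrix.vecMulVec (a i) (a i)).trace ∧
      (∑ i, Matrix.vecMulVec (a i) (a i)).trace = ∑ i, ∑ j, a i j ^ 2 := by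
  classical
  have htr_eq : (∑ i, Matrix.vecMulVec (a i) (a i)).trace = ∑ i, ∑ j, a i j ^ 2 := by
    rw [Matrix.trace_sum]
    exact Finset.sum_congr rfl fun i _ => by
      rw [vmv_trace]
      exact Finset.sum_congr rfl fun j _ => (pow_two _).symm
  rcases Nat.eq_zero_or_pos k with hk0 | hk
  · refine ⟨fun _ => 0, fun i => le_rfl, ?_, ?_, ?_, htr_eq⟩
    · have h : {i : Fin n | (fun _ : Fin n => (0:ℝ)) i ≠ 0} = ∅ := by ext i; simp
      rw [h, Set.ncard_empty]
      exact Nat.zero_le r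
    · intro hA j
      exact absurd j.isLt (by omega)
    · have h : (∑ i, (fun _ : Fin n => (0:ℝ)) i • Matrix.vecMulVec (a i) (a i)) = 0 := by
        simp
      rw [h, Matrix.trace_zero, htr_eq]
      positivity
  -- main case
  set ε : ℝ := Real.sqrt ((k : ℝ) / (r : ℝ)) with hε
  set T : ℝ := ∑ i, ∑ j, a i j ^ 2 with hT
  have hrpos : (0:ℝ) < r := by
    have : 0 < r := lt_of_le_of_lt (Nat.zero_le k) hkr
    exact_mod_cast this
  have hkpos : (0:ℝ) < k := by exact_mod_cast hk
  have hε0 : 0 < ε := Real.sqrt_pos.mpr (div_pos hkpos hrpos)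
  have hε1 : ε < 1 := by
    rw [hε, show (1:ℝ) = Real.sqrt 1 from (Real.sqrt_one).symm]
    apply Real.sqrt_lt_sqrt (by positivity)
    rw [div_lt_one hrpos]
    exact_mod_cast hkr
  have h1ε : (0:ℝ) < 1 - ε := by linarith
  have hsrk_pos : (0:ℝ) < Real.sqrt ((r:ℝ) * k) := Real.sqrt_pos.mpr (by positivity)
  have hrk : Real.sqrt ((r:ℝ) * k) = r * ε := by
    rw [hε, show ((r:ℝ) * k) = (r:ℝ)^2 * ((k:ℝ)/r) from by field_simp,
      Real.sqrt_mul (sq_nonneg _), Real.sqrt_sq hrpos.le]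
  have hε2 : ε ^ 2 = (k:ℝ)/r := Real.sq_sqrt (by positivity)
  have hεk : (k:ℝ) * (Real.sqrt ((r:ℝ) * k))⁻¹ = ε := by
    rw [hrk]
    have hmul : ε * ((r:ℝ) * ε) = k := by
      rw [show ε * ((r:ℝ) * ε) = (r:ℝ) * ε^2 from by ring, hε2]
      field_simp
    rw [← hmul, mul_inv_cancel_right₀ (by positivity)]
  have hTnn : 0 ≤ T := by rw [hT]; positivity
  -- induction
  have main : ∀ τ : ℕ, ∃ w : Fin n → ℝ, (∀ i, 0 ≤ w i) ∧
      {i | w i ≠ 0}.ncard ≤ τ ∧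
      (∑ i, w i * (∑ j, a i j ^ 2)) * (1 - ε) ≤ τ * T ∧
      ((∑ i, w i • Matrix.vecMulVec (v i) (v i)) - ((τ:ℝ) - Real.sqrt ((r:ℝ)*k)) • 1).PosDef ∧
      ((∑ i, w i • Matrix.vecMulVec (v i) (v i)) - ((τ:ℝ) - Real.sqrt ((r:ℝ)*k)) • 1)⁻¹.trace
        ≤ ε := by
    intro τ
    induction τ with
    | zero =>
      have hA0 : (∑ i, (fun _ : Fin n => (0:ℝ)) i • Matrix.vecMulVec (v i) (v i)) = 0 := by
        simp
      have hM : (∑ i, (fun _ : Fin n => (0:ℝ)) i • Matrix.vecMulVec (v i) (v i))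
          - (((0:ℕ):ℝ) - Real.sqrt ((r:ℝ)*k)) • 1
          = Real.sqrt ((r:ℝ)*k) • (1 : Matrix (Fin k) (Fin k) ℝ) := by
        rw [hA0]
        push_cast
        rw [zero_sub, ← neg_smul]
        norm_num
      have hinv : (Real.sqrt ((r:ℝ)*k) • (1 : Matrix (Fin k) (Fin k) ℝ))⁻¹
          = (Real.sqrt ((r:ℝ)*k))⁻¹ • 1 := by
        apply Matrix.inv_eq_right_inv
        rw [Matrix.smul_mul, Matrix.mul_smul, smul_smul, Matrix.one_mul,
          mul_inv_cancel₀ hsrk_pos.ne', one_smul]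
      refine ⟨fun _ => 0, fun i => le_rfl, ?_, ?_, ?_, ?_⟩
      · have h : {i : Fin n | (fun _ : Fin n => (0:ℝ)) i ≠ 0} = ∅ := by ext i; simp
        rw [h, Set.ncard_empty]
      · simp
      · rw [hM]
        exact smul_posDef Matrix.PosDef.one hsrk_pos
      · rw [hM, hinv, Matrix.trace_smul, Matrix.trace_one, smul_eq_mul]
        rw [show ((Fintype.card (Fin k)):ℝ) = (k:ℝ) from by rw [Fintype.card_fin]]
        rw [← hεk]
        ring_nf
        exact le_rfl
    | succ τ ih =>
      obtain ⟨w, hw0, hwcard, hwbud, hwpd, hwtr⟩ := ih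
      have hAT : (∑ i, w i • Matrix.vecMulVec (v i) (v i))ᵀ
          = ∑ i, w i • Matrix.vecMulVec (v i) (v i) := by
        rw [Matrix.transpose_sum]
        exact Finset.sum_congr rfl fun i _ => by
          rw [Matrix.transpose_smul, vmv_transpose]
      obtain ⟨i0, t, htpos, hbud, hpd', htr'⟩ :=
        bss_step hk v a hv ε hε0 hε1 (∑ i, w i • Matrix.vecMulVec (v i) (v i)) hAT
          ((τ:ℝ) - Real.sqrt ((r:ℝ)*k)) hwpd hwtr
      set w' : Fin n → ℝ := fun j => w j + if j = i0 then t else 0 with hw'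
      have hsum : (∑ i, w' i • Matrix.vecMulVec (v i) (v i))
          = (∑ i, w i • Matrix.vecMulVec (v i) (v i)) + t • Matrix.vecMulVec (v i0) (v i0) := by
        rw [hw']
        simp only [add_smul, ite_smul, zero_smul, Finset.sum_add_distrib]
        congr 1
        rw [Finset.sum_ite_eq' Finset.univ i0 (fun j => t • Matrix.vecMulVec (v j) (v j))]
        simp
      have hcast : (((τ+1:ℕ)):ℝ) - Real.sqrt ((r:ℝ)*k)
          = (((τ:ℕ):ℝ) - Real.sqrt ((r:ℝ)*k)) + 1 := by push_cast; ring
      refine ⟨w', ?_, ?_, ?_, ?_, ?_⟩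
      · intro i
        rw [hw']
        dsimp only
        split <;> [linarith [hw0 i, htpos]; simpa using hw0 i]
      · have hsub : {j | w' j ≠ 0} ⊆ {j | w j ≠ 0} ∪ {i0} := by
          intro j hj
          by_cases hji : j = i0
          · right; exact hji
          · left
            simp only [hw', hji, if_false, add_zero, Set.mem_setOf_eq] at hj ⊢
            exact hj
        calc {j | w' j ≠ 0}.ncard ≤ ({j | w j ≠ 0} ∪ {i0}).ncard :=
              Set.ncard_le_ncard hsub (Set.toFinite _)
          _ ≤ {j | w j ≠ 0}.ncard + ({i0} : Set (Fin n)).ncard := Set.ncard_union_le _ _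
          _ = {j | w j ≠ 0}.ncard + 1 := by rw [Set.ncard_singleton]
          _ ≤ τ + 1 := by omega
      · have hsum2 : ∑ i, w' i * (∑ j, a i j ^ 2)
            = (∑ i, w i * (∑ j, a i j ^ 2)) + t * (∑ j, a i0 j ^ 2) := by
          rw [hw']
          simp only [add_mul, ite_mul, zero_mul, Finset.sum_add_distrib]
          congr 1
          rw [Finset.sum_ite_eq' Finset.univ i0 (fun j => t * (∑ j', a j j' ^ 2))]
          simp
        rw [hsum2, add_mul]
        have hb : t * (∑ j, a i0 j ^ 2) * (1 - ε) ≤ T := by rw [hT]; exact hbud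
        push_cast
        nlinarith [hwbud, hb]
      · rw [hsum, hcast]
        have : (∑ i, w i • Matrix.vecMulVec (v i) (v i)) + t • Matrix.vecMulVec (v i0) (v i0)
            - ((((τ:ℕ):ℝ) - Real.sqrt ((r:ℝ)*k)) + 1) • 1
            = (∑ i, w i • Matrix.vecMulVec (v i) (v i)) + t • Matrix.vecMulVec (v i0) (v i0)
            - (((τ:ℕ):ℝ) - Real.sqrt ((r:ℝ)*k) + 1) • 1 := rfl
        exact hpd'
      · rw [hsum, hcast]
        exact htr'
  -- final assembly
  obtain ⟨w, hw0, hwcard, hwbud, hwpd, hwtr⟩ := main r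
  set c : ℝ := (1 - ε) / r with hc
  have hcpos : 0 < c := div_pos h1ε hrpos
  refine ⟨fun i => c * w i, fun i => mul_nonneg hcpos.le (hw0 i), ?_, ?_, ?_, htr_eq⟩
  · have h : {i : Fin n | (fun i => c * w i) i ≠ 0} = {i | w i ≠ 0} := by
      ext i
      simp [mul_ne_zero_iff, hcpos.ne']
    rw [h]
    exact hwcard
  · intro hA j
    have hS : (∑ i, (c * w i) • Matrix.vecMulVec (v i) (v i))
        = c • (∑ i, w i • Matrix.vecMulVec (v i) (v i)) := by
      rw [Finset.smul_sum]
      exact Finset.sum_congr rfl fun i _ => by rw [smul_smul]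
    have hlval : c * (((r:ℕ):ℝ) - Real.sqrt ((r:ℝ)*k)) = (1 - ε)^2 := by
      rw [hrk, hc]
      field_simp
    have hpsd : ((∑ i, (c * w i) • Matrix.vecMulVec (v i) (v i)) - (1 - ε)^2 • 1).PosSemidef := by
      have heq : (∑ i, (c * w i) • Matrix.vecMulVec (v i) (v i)) - (1 - ε)^2 • 1
          = c • ((∑ i, w i • Matrix.vecMulVec (v i) (v i))
              - (((r:ℕ):ℝ) - Real.sqrt ((r:ℝ)*k)) • 1) := by
        rw [smul_sub, ← hS, smul_smul, hlval]
      rw [heq]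
      exact (smul_posDef hwpd hcpos).posSemidef
    exact eig_lower hA _ hpsd j
  · have hLHS : (∑ i, (c * w i) • Matrix.vecMulVec (a i) (a i)).trace
        = c * ∑ i, w i * (∑ j, a i j ^ 2) := by
      rw [Matrix.trace_sum, Finset.mul_sum]
      exact Finset.sum_congr rfl fun i _ => by
        rw [Matrix.trace_smul, vmv_trace, smul_eq_mul]
        rw [show (a i) ⬝ᵥ (a i) = ∑ j, a i j ^ 2 from
          Finset.sum_congr rfl fun j _ => (pow_two _).symm]
        ring
    rw [hLHS, htr_eq]
    have h1 : (∑ i, w i * (∑ j, a i j ^ 2)) * (1 - ε) ≤ r * T := hwbud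
    have h2 : 0 ≤ ∑ i, w i * (∑ j, a i j ^ 2) := by
      apply Finset.sum_nonneg
      intro i _
      have : (0:ℝ) ≤ ∑ j, a i j ^ 2 := by positivity
      exact mul_nonneg (hw0 i) this
    rw [hc]
    rw [div_mul_eq_mul_div, div_le_iff₀ hrpos]
    calc (1 - ε) * ∑ i, w i * (∑ j, a i j ^ 2) = (∑ i, w i * (∑ j, a i j ^ 2)) * (1 - ε) := by ring
      _ ≤ r * T := h1
      _ = T * r := by ring
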